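/- GIT stability of (2,2)-curves: a curve C ⊂ P^1×P^1 of bidegree (2,2) given by f = Σ a_{ij} x^{2-i}y^i u^{2-j}v^j is not GIT stable for the PGL_2×PGL_2 action if and only if C is singular; in particular, if a_{00} = a_{10} = a_{01} = 0 (C singular at ([1:0],[1:0])), then the diagonal one-parameter subgroup λ = (1,-1,1,-1) satisfies μ(f,λ) ≤ 0, where μ(f,λ) = max{ r_0(2-2i) + r_1(2-2j) : a_{ij} ≠ 0 } for λ = (r_0,-r_0,r_1,-r_1). -/

import Mathlib

open MvPolynomial

/-- Linear substitution on `ℂ[x,y,u,v]` induced by `(A,B) ∈ SL₂ × SL₂`: `A` acts on the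
variables `x = X 0, y = X 1` and `B` acts on `u = X 2, v = X 3`. -/
noncomputable def biSubst (A B : Matrix (Fin 2) (Fin 2) ℂ) :
    MvPolynomial (Fin 4) ℂ →ₐ[ℂ] MvPolynomial (Fin 4) ℂ :=
  aeval ![C (A 0 0) * X 0 + C (A 0 1) * X 1,
          C (A 1 0) * X 0 + C (A 1 1) * X 1,
          C (B 0 0) * X 2 + C (B 0 1) * X 3,
          C (B 1 0) * X 2 + C (B 1 1) * X 3]

/-- The bidegree `(2,2)` form `f = ∑ aᵢⱼ x^{2-i} y^i u^{2-j} v^j`. -/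
noncomputable def form22 (a : Fin 3 → Fin 3 → ℂ) : MvPolynomial (Fin 4) ℂ :=
  ∑ i : Fin 3, ∑ j : Fin 3,
    C (a i j) * X 0 ^ (2 - (i : ℕ)) * X 1 ^ (i : ℕ) * X 2 ^ (2 - (j : ℕ)) * X 3 ^ (j : ℕ)

/-- The coefficient of the monomial `x^{2-i} y^i u^{2-j} v^j` in `f`. -/
noncomputable def coeff22 (f : MvPolynomial (Fin 4) ℂ) (i j : Fin 3) : ℂ :=
  coeff (Finsupp.single (0 : Fin 4) (2 - (i : ℕ)) + Finsupp.single (1 : Fin 4) (i : ℕ) +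
    Finsupp.single (2 : Fin 4) (2 - (j : ℕ)) + Finsupp.single (3 : Fin 4) (j : ℕ)) f

/-- The Hilbert–Mumford weight of the monomial `x^{2-i} y^i u^{2-j} v^j` under the diagonal
one-parameter subgroup `λ = (r₀, -r₀, r₁, -r₁)`. -/
def hmWeight (r₀ r₁ : ℤ) (i j : Fin 3) : ℤ :=
  r₀ * (2 - 2 * (i : ℤ)) + r₁ * (2 - 2 * (j : ℤ))

/-- GIT stability of the `(2,2)`-curve `{f = 0}` for the `PGL₂ × PGL₂`-action, via the
Hilbert–Mumford criterion: every one-parameter subgroup is conjugate to a diagonal one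
`λ = (r₀, -r₀, r₁, -r₁)` with `r₁ ≥ r₀ ≥ 0`, `r₁ > 0`, so stability says that for every
group translate of `f` and every such `λ` the weight `μ(f, λ) > 0`, i.e. some nonzero
coefficient has positive Hilbert–Mumford weight. -/
def GITStable22 (a : Fin 3 → Fin 3 → ℂ) : Prop :=
  ∀ g : Matrix.SpecialLinearGroup (Fin 2) ℂ × Matrix.SpecialLinearGroup (Fin 2) ℂ,
    ∀ r₀ r₁ : ℤ, 0 ≤ r₀ → r₀ ≤ r₁ → 0 < r₁ →
      ∃ i j : Fin 3,
        coeff22 (biSubst (g.1 : Matrix (Fin 2) (Fin 2) ℂ)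
          (g.2 : Matrix (Fin 2) (Fin 2) ℂ) (form22 a)) i j ≠ 0 ∧
        0 < hmWeight r₀ r₁ i j

/-- The curve `{f = 0} ⊂ ℙ¹ × ℙ¹` is singular: at some point (given by nonzero affine
representatives `(x,y)` and `(u,v)`) the form and all its partial derivatives vanish. -/
def Singular22 (a : Fin 3 → Fin 3 → ℂ) : Prop :=
  ∃ x y u v : ℂ, ¬(x = 0 ∧ y = 0) ∧ ¬(u = 0 ∧ v = 0) ∧
    eval ![x, y, u, v] (form22 a) = 0 ∧
    ∀ s : Fin 4, eval ![x, y, u, v] (pderiv s (form22 a)) = 0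

/-! ### Auxiliary machinery -/

def E22 (a : Fin 3 → Fin 3 → ℂ) (x y u v : ℂ) : ℂ :=
  a 0 0*x^2*u^2 + a 0 1*x^2*u*v + a 0 2*x^2*v^2
  + a 1 0*x*y*u^2 + a 1 1*x*y*u*v + a 1 2*x*y*v^2
  + a 2 0*y^2*u^2 + a 2 1*y^2*u*v + a 2 2*y^2*v^2

def Dx22 (a : Fin 3 → Fin 3 → ℂ) (x y u v : ℂ) : ℂ :=
  2*(a 0 0)*x*u^2 + 2*(a 0 1)*x*u*v + 2*(a 0 2)*x*v^2
  + a 1 0*y*u^2 + a 1 1*y*u*v + a 1 2*y*v^2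

def Dy22 (a : Fin 3 → Fin 3 → ℂ) (x y u v : ℂ) : ℂ :=
  a 1 0*x*u^2 + a 1 1*x*u*v + a 1 2*x*v^2
  + 2*(a 2 0)*y*u^2 + 2*(a 2 1)*y*u*v + 2*(a 2 2)*y*v^2

def Du22 (a : Fin 3 → Fin 3 → ℂ) (x y u v : ℂ) : ℂ :=
  2*(a 0 0)*x^2*u + a 0 1*x^2*v + 2*(a 1 0)*x*y*u + a 1 1*x*y*v
  + 2*(a 2 0)*y^2*u + a 2 1*y^2*v

def Dv22 (a : Fin 3 → Fin 3 → ℂ) (x y u v : ℂ) : ℂ :=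
  a 0 1*x^2*u + 2*(a 0 2)*x^2*v + a 1 1*x*y*u + 2*(a 1 2)*x*y*v
  + a 2 1*y^2*u + 2*(a 2 2)*y^2*v

lemma eval_form22 (a : Fin 3 → Fin 3 → ℂ) (x y u v : ℂ) :
    eval ![x,y,u,v] (form22 a) = E22 a x y u v := by
  simp [form22, Fin.sum_univ_three, E22]; ring

lemma evalD0_form22 (a : Fin 3 → Fin 3 → ℂ) (x y u v : ℂ) :
    eval ![x,y,u,v] (pderiv 0 (form22 a)) = Dx22 a x y u v := by
  simp [form22, Fin.sum_univ_three, pderiv_mul, pderiv_pow, pderiv_X, Dx22]; ring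

lemma evalD1_form22 (a : Fin 3 → Fin 3 → ℂ) (x y u v : ℂ) :
    eval ![x,y,u,v] (pderiv 1 (form22 a)) = Dy22 a x y u v := by
  simp [form22, Fin.sum_univ_three, pderiv_mul, pderiv_pow, pderiv_X, Dy22]; ring

lemma evalD2_form22 (a : Fin 3 → Fin 3 → ℂ) (x y u v : ℂ) :
    eval ![x,y,u,v] (pderiv 2 (form22 a)) = Du22 a x y u v := by
  simp [form22, Fin.sum_univ_three, pderiv_mul, pderiv_pow, pderiv_X, Du22]; ring

lemma evalD3_form22 (a : Fin 3 → Fin 3 → ℂ) (x y u v : ℂ) :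
    eval ![x,y,u,v] (pderiv 3 (form22 a)) = Dv22 a x y u v := by
  simp [form22, Fin.sum_univ_three, pderiv_mul, pderiv_pow, pderiv_X, Dv22]; ring

set_option maxHeartbeats 2000000 in
lemma coeff22_form22 (a : Fin 3 → Fin 3 → ℂ) (i j : Fin 3) :
    coeff22 (form22 a) i j = a i j := by
  fin_cases i <;> fin_cases j <;>
  · simp only [coeff22, form22, Fin.sum_univ_three, X_pow_eq_monomial, C_mul_monomial,
      monomial_mul, coeff_add, coeff_monomial]
    simp [Finsupp.ext_iff, Finsupp.single_apply, Fin.forall_fin_succ]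
    try rfl

noncomputable def sym2M (A : Matrix (Fin 2) (Fin 2) ℂ) : Fin 3 → Fin 3 → ℂ :=
  ![![A 0 0 ^ 2, A 0 0 * A 1 0, A 1 0 ^ 2],
    ![2 * A 0 0 * A 0 1, A 0 0 * A 1 1 + A 0 1 * A 1 0, 2 * A 1 0 * A 1 1],
    ![A 0 1 ^ 2, A 0 1 * A 1 1, A 1 1 ^ 2]]

noncomputable def substCoeff (A B : Matrix (Fin 2) (Fin 2) ℂ) (a : Fin 3 → Fin 3 → ℂ) :
    Fin 3 → Fin 3 → ℂ :=
  fun k l => ∑ i : Fin 3, ∑ j : Fin 3, a i j * sym2M A k i * sym2M B l j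

set_option maxHeartbeats 2000000 in
lemma biSubst_form22 (A B : Matrix (Fin 2) (Fin 2) ℂ) (a : Fin 3 → Fin 3 → ℂ) :
    biSubst A B (form22 a) = form22 (substCoeff A B a) := by
  simp only [biSubst, form22, substCoeff, sym2M, Fin.sum_univ_three, map_add, map_mul,
    map_pow, map_one, aeval_X, aeval_C, algebraMap_eq, Matrix.cons_val_zero, Matrix.cons_val_one,
    Matrix.head_cons, map_sum, Fin.val_zero, Fin.val_one, Fin.val_two, pow_zero, pow_one,
    Matrix.cons_val_two, Matrix.tail_cons, Matrix.cons_val_three, map_ofNat, C_add, C_mul, C_pow]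
  ring

/-- transport of a singular point of the substituted form back to the original form -/
lemma transport (A B : Matrix (Fin 2) (Fin 2) ℂ) (hA : A.det = 1) (hB : B.det = 1)
    (a : Fin 3 → Fin 3 → ℂ) (s t w z : ℂ) (hst : ¬(s=0∧t=0)) (hwz : ¬(w=0∧z=0))
    (h0 : E22 (substCoeff A B a) s t w z = 0)
    (h1 : Dx22 (substCoeff A B a) s t w z = 0)
    (h2 : Dy22 (substCoeff A B a) s t w z = 0)
    (h3 : Du22 (substCoeff A B a) s t w z = 0)
    (h4 : Dv22 (substCoeff A B a) s t w z = 0) :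
    Singular22 a := by
  rw [Matrix.det_fin_two] at hA hB
  set px := A 0 0 * s + A 0 1 * t with hpx
  set py := A 1 0 * s + A 1 1 * t with hpy
  set pu := B 0 0 * w + B 0 1 * z with hpu
  set pv := B 1 0 * w + B 1 1 * z with hpv
  have hE : E22 (substCoeff A B a) s t w z = E22 a px py pu pv := by
    simp [E22, substCoeff, sym2M, Fin.sum_univ_three, hpx, hpy, hpu, hpv]; ring
  have hDx : Dx22 (substCoeff A B a) s t w z
      = A 0 0 * Dx22 a px py pu pv + A 1 0 * Dy22 a px py pu pv := by
    simp [Dx22, Dy22, substCoeff, sym2M, Fin.sum_univ_three, hpx, hpy, hpu, hpv]; ring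
  have hDy : Dy22 (substCoeff A B a) s t w z
      = A 0 1 * Dx22 a px py pu pv + A 1 1 * Dy22 a px py pu pv := by
    simp [Dx22, Dy22, substCoeff, sym2M, Fin.sum_univ_three, hpx, hpy, hpu, hpv]; ring
  have hDu : Du22 (substCoeff A B a) s t w z
      = B 0 0 * Du22 a px py pu pv + B 1 0 * Dv22 a px py pu pv := by
    simp [Du22, Dv22, substCoeff, sym2M, Fin.sum_univ_three, hpx, hpy, hpu, hpv]; ring
  have hDv : Dv22 (substCoeff A B a) s t w z
      = B 0 1 * Du22 a px py pu pv + B 1 1 * Dv22 a px py pu pv := by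
    simp [Du22, Dv22, substCoeff, sym2M, Fin.sum_univ_three, hpx, hpy, hpu, hpv]; ring
  rw [hE] at h0; rw [hDx] at h1; rw [hDy] at h2; rw [hDu] at h3; rw [hDv] at h4
  have hx0 : Dx22 a px py pu pv = 0 := by
    linear_combination A 1 1 * h1 - A 1 0 * h2 - Dx22 a px py pu pv * hA
  have hy0 : Dy22 a px py pu pv = 0 := by
    linear_combination A 0 0 * h2 - A 0 1 * h1 - Dy22 a px py pu pv * hA
  have hu0 : Du22 a px py pu pv = 0 := by
    linear_combination B 1 1 * h3 - B 1 0 * h4 - Du22 a px py pu pv * hB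
  have hv0 : Dv22 a px py pu pv = 0 := by
    linear_combination B 0 0 * h4 - B 0 1 * h3 - Dv22 a px py pu pv * hB
  refine ⟨px, py, pu, pv, ?_, ?_, ?_, ?_⟩
  · rintro ⟨h, h'⟩
    exact hst ⟨by linear_combination A 1 1 * h - A 0 1 * h' - s * hA,
               by linear_combination A 0 0 * h' - A 1 0 * h - t * hA⟩
  · rintro ⟨h, h'⟩
    exact hwz ⟨by linear_combination B 1 1 * h - B 0 1 * h' - w * hB,
               by linear_combination B 0 0 * h' - B 1 0 * h - z * hB⟩
  · rw [eval_form22]; exact h0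
  · intro i
    fin_cases i
    · exact (evalD0_form22 a px py pu pv).trans hx0
    · exact (evalD1_form22 a px py pu pv).trans hy0
    · exact (evalD2_form22 a px py pu pv).trans hu0
    · exact (evalD3_form22 a px py pu pv).trans hv0

lemma quad_root (α β γ : ℂ) :
    ∃ s t : ℂ, ¬(s = 0 ∧ t = 0) ∧ α*s^2 + β*s*t + γ*t^2 = 0 := by
  by_cases hα : α = 0
  · exact ⟨1, 0, by simp, by simp [hα]⟩
  · obtain ⟨ζ, hζ⟩ := Complex.exists_root (f := Polynomial.C α * Polynomial.X ^ 2
      + Polynomial.C β * Polynomial.X + Polynomial.C γ)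
      (by rw [Polynomial.degree_quadratic hα]; norm_num)
    refine ⟨ζ, 1, by simp, ?_⟩
    have := hζ
    simp [Polynomial.IsRoot, Polynomial.eval_add, Polynomial.eval_mul] at this
    linear_combination this

lemma sl2_complete (x y : ℂ) (h : ¬(x = 0 ∧ y = 0)) : ∃ b d : ℂ, x * d - b * y = 1 := by
  by_cases hx : x = 0
  · have hy : y ≠ 0 := fun hy => h ⟨hx, hy⟩
    exact ⟨-y⁻¹, 0, by field_simp [hx]; ring⟩
  · exact ⟨0, x⁻¹, by field_simp; ring⟩



set_option maxHeartbeats 4000000 in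
/-- A `(2,2)`-curve `C ⊂ ℙ¹×ℙ¹` given by `f = ∑ aᵢⱼ x^{2-i} y^i u^{2-j} v^j ≠ 0` is not GIT
stable for the `PGL₂ × PGL₂`-action if and only if `C` is singular; in particular, if
`a₀₀ = a₁₀ = a₀₁ = 0` (so `C` is singular at `([1:0],[1:0])`), then the diagonal
one-parameter subgroup `λ = (1,-1,1,-1)` satisfies `μ(f,λ) ≤ 0`, i.e. every nonzero
coefficient of `f` has nonpositive Hilbert–Mumford weight for `r₀ = r₁ = 1`. -/
theorem stmt_19 (a : Fin 3 → Fin 3 → ℂ) (ha : form22 a ≠ 0) :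
    (¬ GITStable22 a ↔ Singular22 a) ∧
      ((a 0 0 = 0 ∧ a 1 0 = 0 ∧ a 0 1 = 0) →
        ∀ i j : Fin 3, coeff22 (form22 a) i j ≠ 0 → hmWeight 1 1 i j ≤ 0) := by
  constructor
  · constructor
    · -- ¬ stable → singular
      intro hns
      rw [GITStable22] at hns
      push_neg at hns
      obtain ⟨g, r₀, r₁, hr0, hr01, hr1, hall⟩ := hns
      set A := (g.1 : Matrix (Fin 2) (Fin 2) ℂ) with hAdef
      set B := (g.2 : Matrix (Fin 2) (Fin 2) ℂ) with hBdef
      have hA : A.det = 1 := g.1.2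
      have hB : B.det = 1 := g.2.2
      have key : ∀ i j : Fin 3, 0 < hmWeight r₀ r₁ i j → substCoeff A B a i j = 0 := by
        intro i j hw
        by_contra hc
        have := hall i j (by rwa [biSubst_form22, coeff22_form22]) 
        omega
      by_cases hr0' : 0 < r₀
      · -- singular at (1,0,1,0)
        have h00 : substCoeff A B a 0 0 = 0 := key 0 0 (by simp [hmWeight]; omega)
        have h10 : substCoeff A B a 1 0 = 0 := key 1 0 (by simp [hmWeight]; omega)
        have h01 : substCoeff A B a 0 1 = 0 := key 0 1 (by simp [hmWeight]; omega)
        refine transport A B hA hB a 1 0 1 0 (by simp) (by simp) ?_ ?_ ?_ ?_ ?_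
        · simp [E22, h00]
        · simp [Dx22, h00]
        · simp [Dy22, h10]
        · simp [Du22, h00]
        · simp [Dv22, h01]
      · have hr00 : r₀ = 0 := le_antisymm (not_lt.mp hr0') hr0
        have h00 : substCoeff A B a 0 0 = 0 := key 0 0 (by simp [hmWeight, hr00]; omega)
        have h10 : substCoeff A B a 1 0 = 0 := key 1 0 (by simp [hmWeight, hr00]; omega)
        have h20 : substCoeff A B a 2 0 = 0 := key 2 0 (by simp [hmWeight, hr00]; omega)
        obtain ⟨s, t, hst, hq⟩ := quad_root (substCoeff A B a 0 1) (substCoeff A B a 1 1)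
          (substCoeff A B a 2 1)
        refine transport A B hA hB a s t 1 0 hst (by simp) ?_ ?_ ?_ ?_ ?_
        · simp [E22, h00, h10, h20]
        · simp [Dx22, h00, h10]
        · simp [Dy22, h10, h20]
        · simp [Du22, h00, h10, h20]
        · simp [Dv22]; linear_combination hq
    · -- singular → ¬ stable
      rintro ⟨x, y, u, v, hxy, huv, heval, hderiv⟩ hstab
      rw [eval_form22] at heval
      have hDx := hderiv 0; rw [evalD0_form22] at hDx
      have hDy := hderiv 1; rw [evalD1_form22] at hDy
      have hDu := hderiv 2; rw [evalD2_form22] at hDu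
      have hDv := hderiv 3; rw [evalD3_form22] at hDv
      simp only [E22] at heval
      simp only [Dx22] at hDx
      simp only [Dy22] at hDy
      simp only [Du22] at hDu
      simp only [Dv22] at hDv
      obtain ⟨b, d, hbd⟩ := sl2_complete x y hxy
      obtain ⟨b', d', hbd'⟩ := sl2_complete u v huv
      set A : Matrix (Fin 2) (Fin 2) ℂ := !![x, b; y, d] with hAdef
      set B : Matrix (Fin 2) (Fin 2) ℂ := !![u, b'; v, d'] with hBdef
      have hA : A.det = 1 := by rw [Matrix.det_fin_two_of]; linear_combination hbd
      have hB : B.det = 1 := by rw [Matrix.det_fin_two_of]; linear_combination hbd'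
      obtain ⟨i, j, hc, hw⟩ := hstab ⟨⟨A, hA⟩, ⟨B, hB⟩⟩ 1 1 zero_le_one le_rfl zero_lt_one
      rw [biSubst_form22, coeff22_form22] at hc
      have hA00 : substCoeff A B a 0 0 = 0 := by
        simp only [substCoeff, sym2M, Fin.sum_univ_three, hAdef, hBdef,
          Matrix.cons_val_zero, Matrix.cons_val_one, Matrix.head_cons, Matrix.of_apply,
          Matrix.cons_val_two, Matrix.tail_cons,
          Matrix.cons_val', Matrix.head_fin_const, Matrix.empty_val']
        linear_combination heval
      have hA10 : substCoeff A B a 1 0 = 0 := by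
        simp only [substCoeff, sym2M, Fin.sum_univ_three, hAdef, hBdef,
          Matrix.cons_val_zero, Matrix.cons_val_one, Matrix.head_cons, Matrix.of_apply,
          Matrix.cons_val_two, Matrix.tail_cons,
          Matrix.cons_val', Matrix.head_fin_const, Matrix.empty_val']
        linear_combination b * hDx + d * hDy
      have hA01 : substCoeff A B a 0 1 = 0 := by
        simp only [substCoeff, sym2M, Fin.sum_univ_three, hAdef, hBdef,
          Matrix.cons_val_zero, Matrix.cons_val_one, Matrix.head_cons, Matrix.of_apply,
          Matrix.cons_val_two, Matrix.tail_cons,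
          Matrix.cons_val', Matrix.head_fin_const, Matrix.empty_val']
        linear_combination b' * hDu + d' * hDv
      fin_cases i <;> fin_cases j <;> norm_num [hmWeight] at hw <;>
        first
          | exact hc hA00
          | exact hc hA10
          | exact hc hA01
  · rintro ⟨h00, h10, h01⟩ i j hc
    rw [coeff22_form22] at hc
    fin_cases i <;> fin_cases j <;>
      first
        | (exact absurd h00 hc)
        | (exact absurd h10 hc)
        | (exact absurd h01 hc)
        | (norm_num [hmWeight])
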